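/- If F₁, F₂, ... are concave functions on an open convex set E ⊆ ℝᵖ converging pointwise to a function f : E → ℝ that has a unique maximizer x̂ ∈ E, and xₙ maximizes Fₙ over E, then the sequence (xₙ) converges to x̂ (deterministic version of the Andersen–Gill convexity lemma). -/

import Mathlib

open Filter

/-- Deterministic version of the Andersen–Gill convexity lemma: if concave
functions `F n` on an open convex set `E ⊆ ℝᵖ` converge pointwise to `f`,
which has a unique maximizer `x̂ ∈ E`, and `x n` maximizes `F n` over `E`,
then `x n → x̂`. -/
theorem andersen_gill_convexity_lemma
    {p : ℕ} (E : Set (Fin p → ℝ)) (hEopen : IsOpen E) (hEconv : Convex ℝ E)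
    (F : ℕ → (Fin p → ℝ) → ℝ) (hFconc : ∀ n, ConcaveOn ℝ E (F n))
    (f : (Fin p → ℝ) → ℝ)
    (hconv : ∀ y ∈ E, Tendsto (fun n => F n y) atTop (nhds (f y)))
    (xhat : Fin p → ℝ) (hxhatE : xhat ∈ E)
    (hmax : ∀ y ∈ E, y ≠ xhat → f y < f xhat)
    (x : ℕ → Fin p → ℝ) (hxE : ∀ n, x n ∈ E)
    (hxmax : ∀ n, ∀ y ∈ E, F n y ≤ F n (x n)) :
    Tendsto x atTop (nhds xhat) := by
  classical
  -- `f` is concave on `E` as a pointwise limit of concave functions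
  have hfconc : ConcaveOn ℝ E f := by
    refine ⟨hEconv, fun a ha b hb s t hs ht hst => ?_⟩
    have hmem : s • a + t • b ∈ E := hEconv ha hb hs ht hst
    refine le_of_tendsto_of_tendsto'
      (((hconv a ha).const_mul s).add ((hconv b hb).const_mul t))
      (hconv _ hmem) fun n => ?_
    simpa [smul_eq_mul] using (hFconc n).2 ha hb hs ht hst
  have hfcont : ContinuousOn f E := hfconc.continuousOn hEopen
  rw [Metric.tendsto_nhds]
  intro ε' hε'
  by_contra hcon
  have hfreq : ∃ᶠ n in atTop, ε' ≤ dist (x n) xhat := by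
    simpa [not_lt] using Filter.not_eventually.1 hcon
  -- a closed ball around `xhat` inside `E`
  obtain ⟨ε₀, hε₀pos, hball₀⟩ : ∃ ε₀ > 0, Metric.closedBall xhat ε₀ ⊆ E := by
    obtain ⟨r, hr, hrE⟩ := Metric.isOpen_iff.1 hEopen xhat hxhatE
    exact ⟨r / 2, by positivity,
      (Metric.closedBall_subset_ball (by linarith)).trans hrE⟩
  set ε : ℝ := min ε' ε₀ with hεdef
  have hεpos : 0 < ε := lt_min hε' hε₀pos
  have hballε : Metric.closedBall xhat ε ⊆ E :=
    (Metric.closedBall_subset_closedBall (min_le_right _ _)).trans hball₀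
  have hfreq' : ∃ᶠ n in atTop, ε ≤ dist (x n) xhat :=
    hfreq.mono fun n h => le_trans (min_le_left _ _) h
  obtain ⟨φ, hφ, hφd⟩ := Filter.extraction_of_frequently_atTop hfreq'
  -- project `x (φ k)` onto the sphere of radius `ε`
  set z : ℕ → (Fin p → ℝ) :=
    fun k => xhat + (ε / dist (x (φ k)) xhat) • (x (φ k) - xhat) with hzdef
  have key : ∀ k, z k ∈ Metric.sphere xhat ε ∧ z k ∈ E ∧
      F (φ k) xhat ≤ F (φ k) (z k) := by
    intro k
    have hd : ε ≤ dist (x (φ k)) xhat := hφd k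
    have hdpos : (0:ℝ) < dist (x (φ k)) xhat := lt_of_lt_of_le hεpos hd
    set t : ℝ := ε / dist (x (φ k)) xhat with ht
    have ht0 : 0 ≤ t := div_nonneg hεpos.le hdpos.le
    have ht1 : t ≤ 1 := (div_le_one hdpos).2 hd
    have hcombo : (1 - t) • xhat + t • (x (φ k)) = z k := by
      simp only [hzdef, sub_smul, one_smul, smul_sub]
      abel
    have hmem : z k ∈ E := by
      rw [← hcombo]
      exact hEconv hxhatE (hxE (φ k)) (by linarith) ht0 (by ring)
    refine ⟨?_, hmem, ?_⟩
    · rw [Metric.mem_sphere]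
      have hsub : z k - xhat = t • (x (φ k) - xhat) := by
        simp only [hzdef]; abel
      rw [dist_eq_norm, hsub, norm_smul, Real.norm_eq_abs, abs_of_nonneg ht0,
        ← dist_eq_norm]
      exact div_mul_cancel₀ ε hdpos.ne'
    · have hcc := (hFconc (φ k)).2 hxhatE (hxE (φ k))
        (by linarith : (0:ℝ) ≤ 1 - t) ht0 (by ring)
      rw [hcombo] at hcc
      simp only [smul_eq_mul] at hcc
      have hxx : F (φ k) xhat ≤ F (φ k) (x (φ k)) := hxmax (φ k) xhat hxhatE
      nlinarith [mul_nonneg ht0 (sub_nonneg.2 hxx)]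
  -- extract a convergent subsequence on the compact sphere
  obtain ⟨zs, hzs_sphere, ψ, hψ, hzψ⟩ :=
    (isCompact_sphere xhat ε).tendsto_subseq (fun k => (key k).1)
  have hzsE : zs ∈ E := hballε (Metric.sphere_subset_closedBall hzs_sphere)
  have hzs_ne : zs ≠ xhat := by
    intro h
    have : dist zs xhat = ε := hzs_sphere
    rw [h, dist_self] at this
    exact hεpos.ne this
  set g : ℝ := f xhat - f zs with hgdef
  have hg : 0 < g := sub_pos.2 (hmax zs hzsE hzs_ne)
  set c : ℝ := g / 6 with hcdef
  have hc : 0 < c := by positivity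
  -- continuity of `f` at `zs` within `E`
  obtain ⟨δ, hδpos, hδf⟩ := Metric.continuousWithinAt_iff.1 (hfcont zs hzsE) c hc
  -- a small closed ball around `zs` inside `E`
  obtain ⟨ε₁, hε₁pos, hball₁⟩ : ∃ ε₁ > 0, Metric.closedBall zs ε₁ ⊆ E := by
    obtain ⟨r, hr, hrE⟩ := Metric.isOpen_iff.1 hEopen zs hzsE
    exact ⟨r / 2, by positivity,
      (Metric.closedBall_subset_ball (by linarith)).trans hrE⟩
  set r : ℝ := min ε₁ (δ / 2) with hrdef
  have hrpos : 0 < r := lt_min hε₁pos (by positivity)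
  have hrδ : r < δ := lt_of_le_of_lt (min_le_right _ _) (by linarith)
  have hrE : Metric.closedBall zs r ⊆ E :=
    (Metric.closedBall_subset_closedBall (min_le_left _ _)).trans hball₁
  -- cube vertices around `zs`
  set V : Set (Fin p → ℝ) :=
    Set.univ.pi (fun i => ({zs i - r, zs i + r} : Set ℝ)) with hVdef
  have hVfin : V.Finite :=
    Set.Finite.pi fun i => (Set.finite_singleton _).insert _
  have hVball : V ⊆ Metric.closedBall zs r := by
    intro v hv
    rw [Metric.mem_closedBall]
    rw [dist_pi_le_iff hrpos.le]
    intro i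
    rcases hv i (Set.mem_univ i) with h | h <;>
      rw [Real.dist_eq, h, abs_le] <;> constructor <;> linarith
  have hVE : V ⊆ E := hVball.trans hrE
  have hVf : ∀ v ∈ V, f zs - c ≤ f v := by
    intro v hv
    have hdist : dist v zs < δ := lt_of_le_of_lt (hVball hv) hrδ
    have := hδf (hVE hv) hdist
    rw [Real.dist_eq, abs_lt] at this
    linarith [this.1]
  -- points in the closed ball lie in the convex hull of the cube vertices
  have hhull : ∀ w : Fin p → ℝ, dist w zs ≤ r → w ∈ convexHull ℝ V := by
    intro w hw
    apply mem_convexHull_pi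
    intro i _
    rw [convexHull_pair, segment_eq_Icc (by linarith : zs i - r ≤ zs i + r)]
    have h := (dist_pi_le_iff hrpos.le).1 hw i
    rw [Real.dist_eq, abs_le] at h
    exact ⟨by linarith [h.1], by linarith [h.2]⟩
  -- the reflected points
  set w : ℕ → (Fin p → ℝ) := fun j => zs + (zs - z (ψ j)) with hwdef
  have hwtend : Tendsto w atTop (nhds zs) := by
    have : Tendsto (fun j => zs + (zs - z (ψ j))) atTop (nhds (zs + (zs - zs))) :=
      tendsto_const_nhds.add (tendsto_const_nhds.sub hzψ)
    simpa using this
  set N : ℕ → ℕ := φ ∘ ψ with hNdef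
  have hN : Tendsto N atTop atTop := (hφ.comp hψ).tendsto_atTop
  -- eventual bounds
  have E1 : ∀ᶠ j in atTop, f xhat - c ≤ F (N j) xhat :=
    ((hconv xhat hxhatE).comp hN).eventually (eventually_ge_nhds (by linarith))
  have E2 : ∀ᶠ j in atTop, F (N j) zs ≤ f zs + c :=
    ((hconv zs hzsE).comp hN).eventually (eventually_le_nhds (by linarith))
  have E3 : ∀ᶠ j in atTop, ∀ v ∈ V, f v - c ≤ F (N j) v := by
    rw [eventually_all_finite hVfin]
    intro v hv
    exact ((hconv v (hVE hv)).comp hN).eventually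
      (eventually_ge_nhds (by linarith))
  have E4 : ∀ᶠ j in atTop, dist (w j) zs ≤ r :=
    hwtend.eventually (Metric.closedBall_mem_nhds zs hrpos)
  obtain ⟨j, h1, h2, h3, h4⟩ := (E1.and (E2.and (E3.and E4))).exists
  -- now derive the contradiction
  have hwE : w j ∈ E := hrE h4
  have hzmem : z (ψ j) ∈ E := (key (ψ j)).2.1
  obtain ⟨v, hvV, hvle⟩ :=
    (hFconc (N j)).exists_le_of_mem_convexHull hVE (hhull (w j) h4)
  -- midpoint inequality: zs is the midpoint of `z (ψ j)` and `w j`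
  have hmid : (1/2 : ℝ) • z (ψ j) + (1/2 : ℝ) • w j = zs := by
    simp only [hwdef]; module
  have hconc := (hFconc (N j)).2 hzmem hwE (by norm_num : (0:ℝ) ≤ 1/2)
    (by norm_num : (0:ℝ) ≤ 1/2) (by norm_num)
  rw [hmid] at hconc
  simp only [smul_eq_mul] at hconc
  have hge : F (N j) xhat ≤ F (N j) (z (ψ j)) := (key (ψ j)).2.2
  have hvlow : f zs - 2 * c ≤ F (N j) v := by
    have := h3 v hvV
    have := hVf v hvV
    linarith
  -- chain of inequalities
  have : f xhat - c ≤ f zs + 4 * c := by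
    nlinarith [h1, h2, hge, hconc, hvle, hvlow]
  simp only [hcdef, hgdef] at this
  linarith
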